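/- Let X : Ω → ℝⁿ be a zero-mean random vector that is sub-Gaussian with matrix variance proxy Σ ≻ 0. Then for every m > 0 and every τ ≥ 0, Pr{ ‖X‖_{Σ⁻¹} ≥ τ } ≤ ((1 + m)/m)^{n/2} · exp( −τ² / (2 + 2m) ), where ‖x‖_{Σ⁻¹} := √(xᵀΣ⁻¹x). -/

import Mathlib

open MeasureTheory Matrix
open scoped NNReal ENNReal
open ProbabilityTheory Real
open scoped MatrixOrder

noncomputable section

theorem lintegral_pi_prod' {n : ℕ} {α : Type} [MeasurableSpace α] (μ : Fin n → Measure α)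
    [∀ i, SigmaFinite (μ i)] (f : Fin n → α → ENNReal) (hf : ∀ i, Measurable (f i)) :
    ∫⁻ x : Fin n → α, ∏ i, f i (x i) ∂(Measure.pi μ) = ∏ i, ∫⁻ x, f i x ∂(μ i) := by
  induction n with
  | zero => simp [Measure.pi_empty_univ]
  | succ n ih =>
      have hmp := (measurePreserving_piFinSuccAbove μ 0).symm
      rw [← hmp.lintegral_comp (f := fun x => ∏ i, f i (x i)) (by
        exact Finset.measurable_prod _ fun i _ => (hf i).comp (measurable_pi_apply i))]
      simp_rw [MeasurableEquiv.piFinSuccAbove_symm_apply, Fin.insertNthEquiv,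
        Fin.prod_univ_succ, Fin.insertNth_zero, Equiv.coe_fn_mk, Fin.zero_succAbove, cast_eq,
        Fin.cons_zero, Fin.cons_succ]
      rw [lintegral_prod_mul (f := f 0) (g := fun y : Fin n → α => ∏ i : Fin n, f i.succ (y i))
        (hf 0).aemeasurable
        ((Finset.measurable_prod _ fun i _ =>
          (hf i.succ).comp (measurable_pi_apply i)).aemeasurable)]
      rw [ih (fun i => μ i.succ) (fun i => f i.succ) (fun i => hf i.succ)]

lemma gauss_pdf_mul (s : ℝ≥0) (hs : s ≠ 0) (t x : ℝ) :
    gaussianPDFReal 0 s x * rexp (t * x) = rexp (s * t ^ 2 / 2) * gaussianPDFReal (s * t) s x := by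
  have hs' : (s : ℝ) ≠ 0 := by exact_mod_cast hs
  have key : rexp (-(x - 0) ^ 2 / (2 * (s : ℝ))) * rexp (t * x)
      = rexp ((s : ℝ) * t ^ 2 / 2) * rexp (-(x - (s : ℝ) * t) ^ 2 / (2 * (s : ℝ))) := by
    rw [← Real.exp_add, ← Real.exp_add]
    congr 1
    field_simp
    ring
  simp only [gaussianPDFReal]
  rw [mul_assoc, key]
  ring

lemma lintegral_exp_gauss (s : ℝ≥0) (hs : s ≠ 0) (t : ℝ) :
    ∫⁻ x, ENNReal.ofReal (rexp (t * x)) ∂(gaussianReal 0 s)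
      = ENNReal.ofReal (rexp (s * t ^ 2 / 2)) := by
  have hmeas : Measurable fun x : ℝ => ENNReal.ofReal (rexp (t * x)) := by fun_prop
  rw [gaussianReal_of_var_ne_zero _ hs,
    lintegral_withDensity_eq_lintegral_mul _ (measurable_gaussianPDF _ _) hmeas]
  have h : ∀ x : ℝ, (gaussianPDF 0 s * fun x => ENNReal.ofReal (rexp (t * x))) x
      = ENNReal.ofReal (rexp (s * t ^ 2 / 2)) * ENNReal.ofReal (gaussianPDFReal (s * t) s x) := by
    intro x
    simp only [Pi.mul_apply, gaussianPDF]
    rw [← ENNReal.ofReal_mul (gaussianPDFReal_nonneg _ _ _), gauss_pdf_mul s hs t x,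
      ENNReal.ofReal_mul (Real.exp_nonneg _)]
  simp_rw [h]
  rw [lintegral_const_mul _ (measurable_gaussianPDFReal _ _).ennreal_ofReal,
    lintegral_gaussianPDFReal_eq_one _ hs, mul_one]

lemma lintegral_exp_sq_gauss (s : ℝ≥0) (hs : s ≠ 0) (hs1 : (s : ℝ) < 1) :
    ∫⁻ x, ENNReal.ofReal (rexp (x ^ 2 / 2)) ∂(gaussianReal 0 s)
      = ENNReal.ofReal (Real.sqrt ((1 - (s : ℝ))⁻¹)) := by
  have hs' : (0 : ℝ) < s := lt_of_le_of_ne s.coe_nonneg (by exact_mod_cast hs.symm)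
  have h1s : (0 : ℝ) < 1 - s := by linarith
  have hbpos : 0 < (1 - (s : ℝ)) / (2 * s) := by positivity
  have hmeas : Measurable fun x : ℝ => ENNReal.ofReal (rexp (x ^ 2 / 2)) := by fun_prop
  rw [gaussianReal_of_var_ne_zero _ hs,
    lintegral_withDensity_eq_lintegral_mul _ (measurable_gaussianPDF _ _) hmeas]
  have hpt : ∀ x : ℝ, (gaussianPDF 0 s * fun x => ENNReal.ofReal (rexp (x ^ 2 / 2))) x
      = ENNReal.ofReal ((√(2 * π * s))⁻¹ * rexp (-((1 - (s : ℝ)) / (2 * s)) * x ^ 2)) := by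
    intro x
    simp only [Pi.mul_apply, gaussianPDF, gaussianPDFReal]
    rw [← ENNReal.ofReal_mul (by positivity)]
    congr 1
    rw [mul_assoc, ← Real.exp_add]
    congr 2
    field_simp
    ring
  simp_rw [hpt]
  have hint : Integrable
      (fun x : ℝ => (√(2 * π * s))⁻¹ * rexp (-((1 - (s : ℝ)) / (2 * s)) * x ^ 2)) :=
    (integrable_exp_neg_mul_sq hbpos).const_mul _
  rw [← ofReal_integral_eq_lintegral_ofReal hint (ae_of_all _ fun x => by positivity)]
  congr 1
  rw [integral_const_mul, integral_gaussian,
    show π / ((1 - (s : ℝ)) / (2 * s)) = (2 * π * s) * (1 - (s:ℝ))⁻¹ by field_simp,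
    Real.sqrt_mul (by positivity : (0:ℝ) ≤ 2 * π * (s:ℝ)) ((1 - (s:ℝ))⁻¹),
    Real.sqrt_mul (by positivity : (0:ℝ) ≤ 2 * π) (s : ℝ),
    inv_mul_cancel_left₀ (ne_of_gt (by positivity))]


/-- A random vector `X` with mean `μ` is sub-Gaussian with matrix variance proxy `S`
(`X ~ SG(μ, S)`): its moment generating function exists and
`E[exp(λᵀ(X − μ))] ≤ exp(λᵀ S λ / 2)` for all `λ ∈ ℝⁿ`. -/
def IsSubGaussianMat {Ω : Type*} [MeasurableSpace Ω] {n : ℕ} (P : Measure Ω)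
    (X : Ω → Fin n → ℝ) (μ : Fin n → ℝ) (S : Matrix (Fin n) (Fin n) ℝ) : Prop :=
  ∀ l : Fin n → ℝ,
    Integrable (fun ω => Real.exp (l ⬝ᵥ (X ω - μ))) P ∧
    ∫ ω, Real.exp (l ⬝ᵥ (X ω - μ)) ∂P ≤ Real.exp ((l ⬝ᵥ (S *ᵥ l)) / 2)

/-- if `X` is zero-mean sub-Gaussian with matrix variance proxy `Σ ≻ 0`, then
for every `m > 0` and `τ ≥ 0`,
`Pr{‖X‖_{Σ⁻¹} ≥ τ} ≤ ((1 + m)/m)^{n/2} exp(−τ² / (2 + 2m))`. -/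
theorem subGaussian_mahalanobis_tail_m {Ω : Type*} [MeasurableSpace Ω] {n : ℕ}
    (P : Measure Ω) [IsProbabilityMeasure P]
    (X : Ω → Fin n → ℝ) (hX : Measurable X)
    (Sig : Matrix (Fin n) (Fin n) ℝ) (hSig : Sig.PosDef)
    (hsg : IsSubGaussianMat P X 0 Sig)
    (m : ℝ) (hm : 0 < m) (τ : ℝ) (hτ : 0 ≤ τ) :
    P {ω | τ ≤ Real.sqrt (X ω ⬝ᵥ (Sig⁻¹ *ᵥ X ω))} ≤
      ENNReal.ofReal
        (((1 + m) / m) ^ ((n : ℝ) / 2) * Real.exp (-τ ^ 2 / (2 + 2 * m))) := by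
  have h1m : (0:ℝ) < 1 + m := by linarith
  -- the auxiliary variance
  set s : ℝ≥0 := Real.toNNReal (1 / (1 + m)) with hs_def
  have hs_coe : (s : ℝ) = 1 / (1 + m) := Real.coe_toNNReal _ (by positivity)
  have hs_pos : (0:ℝ) < s := by rw [hs_coe]; positivity
  have hs_ne : s ≠ 0 := by
    intro h
    rw [h] at hs_pos
    exact lt_irrefl _ (by exact_mod_cast hs_pos)
  have hs_lt1 : (s : ℝ) < 1 := by
    rw [hs_coe, div_lt_one h1m]; linarith
  have h1ms : 1 - (s:ℝ) = m / (1 + m) := by rw [hs_coe]; field_simp; ring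
  -- the square root of Sig⁻¹
  set R : Matrix (Fin n) (Fin n) ℝ := CFC.sqrt Sig⁻¹ with hR_def
  have hRR : R * R = Sig⁻¹ := CFC.sqrt_mul_sqrt_self _ hSig.inv.posSemidef.nonneg
  have hRt : Rᵀ = R := by
    have := (nonneg_iff_posSemidef.1 (CFC.sqrt_nonneg Sig⁻¹)).1
    simpa [Matrix.IsHermitian] using this
  have hswap : ∀ (x y : Fin n → ℝ), (R *ᵥ x) ⬝ᵥ y = x ⬝ᵥ (R *ᵥ y) := by
    intro x y
    rw [Matrix.dotProduct_mulVec, ← Matrix.vecMul_transpose, hRt]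
  have hRSR : R * Sig * R = 1 := by
    have hRd : IsUnit R.det := by
      have h2 : R.det * R.det = (Sig⁻¹).det := by rw [← Matrix.det_mul, hRR]
      have hd := hSig.inv.det_pos
      refine isUnit_iff_ne_zero.2 fun h0 => ?_
      rw [h0, mul_zero] at h2
      exact hd.ne' h2.symm
    have hS : Sig = R⁻¹ * R⁻¹ := by
      rw [← Matrix.mul_inv_rev, hRR, Matrix.nonsing_inv_nonsing_inv _ hSig.det_pos.ne'.isUnit]
    rw [hS, Matrix.mul_assoc, Matrix.mul_assoc, Matrix.nonsing_inv_mul _ hRd, Matrix.mul_one,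
      Matrix.mul_nonsing_inv _ hRd]
  -- the standardized vector Z
  set Z : Ω → Fin n → ℝ := fun ω => R *ᵥ X ω with hZ_def
  have hZmeas : Measurable Z := by
    refine measurable_pi_lambda _ fun i => ?_
    simp only [hZ_def, Matrix.mulVec, dotProduct]
    exact Finset.measurable_sum _ fun j _ => ((measurable_pi_apply j).comp hX).const_mul _
  have fact1 : ∀ ω, Z ω ⬝ᵥ Z ω = X ω ⬝ᵥ (Sig⁻¹ *ᵥ X ω) := by
    intro ω
    rw [hZ_def, hswap, Matrix.mulVec_mulVec, hRR]
  have fact2 : ∀ l : Fin n → ℝ, (R *ᵥ l) ⬝ᵥ (Sig *ᵥ (R *ᵥ l)) = l ⬝ᵥ l := by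
    intro l
    rw [hswap, Matrix.mulVec_mulVec, Matrix.mulVec_mulVec, hRSR, Matrix.one_mulVec]
  have fact3 : ∀ (l : Fin n → ℝ) (ω : Ω), (R *ᵥ l) ⬝ᵥ X ω = l ⬝ᵥ Z ω := fun l ω => hswap l (X ω)
  -- the gaussian smoothing measure
  set ν : Measure (Fin n → ℝ) := Measure.pi (fun _ : Fin n => gaussianReal 0 s) with hν_def
  -- Step A: gaussian smoothing identity
  have hA : ∀ z : Fin n → ℝ,
      ∫⁻ l, ENNReal.ofReal (rexp (l ⬝ᵥ z)) ∂ν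
        = ENNReal.ofReal (rexp ((s:ℝ) * (z ⬝ᵥ z) / 2)) := by
    intro z
    have hpt : ∀ l : Fin n → ℝ,
        ENNReal.ofReal (rexp (l ⬝ᵥ z)) = ∏ i, ENNReal.ofReal (rexp (z i * l i)) := by
      intro l
      rw [← ENNReal.ofReal_prod_of_nonneg (fun i _ => Real.exp_nonneg _), ← Real.exp_sum]
      congr 2
      simp [dotProduct, mul_comm]
    simp_rw [hpt]
    rw [lintegral_pi_prod' _ (fun i x => ENNReal.ofReal (rexp (z i * x)))
      (fun i => by fun_prop)]
    have : ∀ i, ∫⁻ x, ENNReal.ofReal (rexp (z i * x)) ∂(gaussianReal 0 s)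
        = ENNReal.ofReal (rexp ((s:ℝ) * (z i) ^ 2 / 2)) := fun i => lintegral_exp_gauss s hs_ne _
    simp_rw [this]
    rw [← ENNReal.ofReal_prod_of_nonneg (fun i _ => Real.exp_nonneg _), ← Real.exp_sum]
    congr 2
    rw [dotProduct, Finset.mul_sum, Finset.sum_div]
    congr 1
    ext i
    ring
  -- Step B : per-λ bound from sub-Gaussianity
  have hB : ∀ l : Fin n → ℝ,
      ∫⁻ ω, ENNReal.ofReal (rexp (l ⬝ᵥ Z ω)) ∂P ≤ ENNReal.ofReal (rexp ((l ⬝ᵥ l) / 2)) := by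
    intro l
    obtain ⟨hint, hbound⟩ := hsg (R *ᵥ l)
    simp only [sub_zero] at hint hbound
    have heq : ∀ ω, (R *ᵥ l) ⬝ᵥ X ω = l ⬝ᵥ Z ω := fun ω => fact3 l ω
    simp_rw [← heq]
    rw [← ofReal_integral_eq_lintegral_ofReal hint (ae_of_all _ fun ω => Real.exp_nonneg _)]
    rw [← fact2 l]
    exact ENNReal.ofReal_le_ofReal hbound
  -- Step D : gaussian integral of exp(|λ|²/2)
  have hD : ∫⁻ l : Fin n → ℝ, ENNReal.ofReal (rexp ((l ⬝ᵥ l) / 2)) ∂ν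
      = ENNReal.ofReal (Real.sqrt ((1 - (s : ℝ))⁻¹)) ^ n := by
    have hpt : ∀ l : Fin n → ℝ,
        ENNReal.ofReal (rexp ((l ⬝ᵥ l) / 2)) = ∏ i, ENNReal.ofReal (rexp ((l i) ^ 2 / 2)) := by
      intro l
      rw [← ENNReal.ofReal_prod_of_nonneg (fun i _ => Real.exp_nonneg _), ← Real.exp_sum]
      congr 2
      rw [dotProduct, Finset.sum_div]
      congr 1
      ext i
      ring
    simp_rw [hpt]
    rw [lintegral_pi_prod' _ (fun i x => ENNReal.ofReal (rexp (x ^ 2 / 2)))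
      (fun i => by fun_prop)]
    simp_rw [lintegral_exp_sq_gauss s hs_ne hs_lt1]
    rw [Finset.prod_const, Finset.card_univ, Fintype.card_fin]
  -- Step C : Tonelli and the Chernoff numerator bound
  have hprodmeas : Measurable (fun p : Ω × (Fin n → ℝ) => ENNReal.ofReal (rexp (p.2 ⬝ᵥ Z p.1))) := by
    have h1 : Measurable fun p : Ω × (Fin n → ℝ) => p.2 ⬝ᵥ Z p.1 := by
      simp only [dotProduct]
      exact Finset.measurable_sum _ fun j _ =>
        ((measurable_pi_apply j).comp measurable_snd).mul
          (((measurable_pi_apply j).comp hZmeas).comp measurable_fst)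
    fun_prop
  have hC : ∫⁻ ω, ENNReal.ofReal (rexp ((s:ℝ) * (Z ω ⬝ᵥ Z ω) / 2)) ∂P
      ≤ ENNReal.ofReal (Real.sqrt ((1 - (s : ℝ))⁻¹)) ^ n := by
    calc ∫⁻ ω, ENNReal.ofReal (rexp ((s:ℝ) * (Z ω ⬝ᵥ Z ω) / 2)) ∂P
        = ∫⁻ ω, ∫⁻ l, ENNReal.ofReal (rexp (l ⬝ᵥ Z ω)) ∂ν ∂P := by
          simp_rw [hA]
      _ = ∫⁻ l, ∫⁻ ω, ENNReal.ofReal (rexp (l ⬝ᵥ Z ω)) ∂P ∂ν := by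
          exact lintegral_lintegral_swap hprodmeas.aemeasurable
      _ ≤ ∫⁻ l, ENNReal.ofReal (rexp ((l ⬝ᵥ l) / 2)) ∂ν := lintegral_mono fun l => hB l
      _ = ENNReal.ofReal (Real.sqrt ((1 - (s : ℝ))⁻¹)) ^ n := hD
  -- Markov / Chernoff step
  set ε : ℝ≥0∞ := ENNReal.ofReal (rexp ((s:ℝ) * τ ^ 2 / 2)) with hε_def
  have hsub : {ω | τ ≤ Real.sqrt (X ω ⬝ᵥ (Sig⁻¹ *ᵥ X ω))}
      ⊆ {ω | ε ≤ ENNReal.ofReal (rexp ((s:ℝ) * (Z ω ⬝ᵥ Z ω) / 2))} := by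
    intro ω hω
    simp only [Set.mem_setOf_eq] at hω ⊢
    have hZZ : 0 ≤ Z ω ⬝ᵥ Z ω := Finset.sum_nonneg fun i _ => mul_self_nonneg _
    have hτ2 : τ ^ 2 ≤ Z ω ⬝ᵥ Z ω := by
      have := Real.sq_sqrt (fact1 ω ▸ hZZ)
      nlinarith [Real.sqrt_nonneg (X ω ⬝ᵥ (Sig⁻¹ *ᵥ X ω)), fact1 ω]
    exact ENNReal.ofReal_le_ofReal (Real.exp_le_exp.2 (by nlinarith))
  have hgmeas : AEMeasurable (fun ω => ENNReal.ofReal (rexp ((s:ℝ) * (Z ω ⬝ᵥ Z ω) / 2))) P := by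
    have h1 : Measurable fun ω => Z ω ⬝ᵥ Z ω := by
      simp only [dotProduct]
      exact Finset.measurable_sum _ fun j _ =>
        ((measurable_pi_apply j).comp hZmeas).mul ((measurable_pi_apply j).comp hZmeas)
    exact (by fun_prop : Measurable fun ω => ENNReal.ofReal (rexp ((s:ℝ) * (Z ω ⬝ᵥ Z ω) / 2))).aemeasurable
  have hmarkov : ε * P {ω | τ ≤ Real.sqrt (X ω ⬝ᵥ (Sig⁻¹ *ᵥ X ω))}
      ≤ ENNReal.ofReal (Real.sqrt ((1 - (s : ℝ))⁻¹)) ^ n := by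
    calc ε * P {ω | τ ≤ Real.sqrt (X ω ⬝ᵥ (Sig⁻¹ *ᵥ X ω))}
        ≤ ε * P {ω | ε ≤ ENNReal.ofReal (rexp ((s:ℝ) * (Z ω ⬝ᵥ Z ω) / 2))} := by
          exact mul_le_mul_right (measure_mono hsub) ε
      _ ≤ ∫⁻ ω, ENNReal.ofReal (rexp ((s:ℝ) * (Z ω ⬝ᵥ Z ω) / 2)) ∂P :=
          mul_meas_ge_le_lintegral₀ hgmeas ε
      _ ≤ ENNReal.ofReal (Real.sqrt ((1 - (s : ℝ))⁻¹)) ^ n := hC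
  -- conclude
  have hε_ne0 : ε ≠ 0 := by simp [hε_def, Real.exp_pos]
  have hε_netop : ε ≠ ⊤ := ENNReal.ofReal_ne_top
  have hfin : P {ω | τ ≤ Real.sqrt (X ω ⬝ᵥ (Sig⁻¹ *ᵥ X ω))}
      ≤ ENNReal.ofReal (Real.sqrt ((1 - (s : ℝ))⁻¹)) ^ n / ε := by
    rw [ENNReal.le_div_iff_mul_le (Or.inl hε_ne0) (Or.inl hε_netop), mul_comm]
    exact hmarkov
  refine hfin.trans (le_of_eq ?_)
  rw [← ENNReal.ofReal_pow (Real.sqrt_nonneg _), hε_def,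
    ← ENNReal.ofReal_div_of_pos (Real.exp_pos _)]
  congr 1
  have hsqrt : Real.sqrt ((1 - (s : ℝ))⁻¹) ^ n = ((1 + m) / m) ^ ((n : ℝ) / 2) := by
    rw [h1ms, inv_div, Real.sqrt_eq_rpow, ← Real.rpow_natCast (((1 + m) / m) ^ ((1:ℝ)/2)) n,
      ← Real.rpow_mul (by positivity)]
    congr 1
    ring
  have harg : (s:ℝ) * τ ^ 2 / 2 = τ ^ 2 / (2 + 2 * m) := by
    rw [hs_coe]
    rw [div_eq_div_iff (by norm_num) (by positivity)]
    field_simp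
  rw [hsqrt, harg, div_eq_mul_inv, ← Real.exp_neg, neg_div]

end
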